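/- Let F be a finite field, G = SL(2, F), and let T be the subgroup of diagonal matrices of G (a quasisplit maximal torus). Let S be a subgroup of G contained in T such that the centralizer of S in G equals T. Then the normalizer of S in G equals the normalizer of T in G. -/

import Mathlib

/-- The subgroup of diagonal matrices of `SL(2, F)` (a quasisplit maximal torus). -/
def diagonalTorusSL2 (F : Type*) [Field F] : Subgroup (Matrix.SpecialLinearGroup (Fin 2) F) where
  carrier := {g | (g : Matrix (Fin 2) (Fin 2) F) 0 1 = 0 ∧
    (g : Matrix (Fin 2) (Fin 2) F) 1 0 = 0}
  one_mem' := by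
    constructor <;> simp [Matrix.SpecialLinearGroup.coe_one]
  mul_mem' := by
    rintro a b ⟨ha01, ha10⟩ ⟨hb01, hb10⟩
    constructor <;>
      simp_all [Matrix.SpecialLinearGroup.coe_mul, Matrix.mul_apply, Fin.sum_univ_two]
  inv_mem' := by
    rintro a ⟨ha01, ha10⟩
    constructor <;>
      simp_all [Matrix.SpecialLinearGroup.coe_inv, Matrix.adjugate_fin_two]

private lemma conj_mem_centralizer {G : Type*} [Group G] {S : Subgroup G} {g t : G}
    (hg : g ∈ Subgroup.normalizer (S : Set G)) (ht : t ∈ Subgroup.centralizer (S : Set G)) :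
    g * t * g⁻¹ ∈ Subgroup.centralizer (S : Set G) := by
  rw [Subgroup.mem_centralizer_iff] at ht ⊢
  intro s hs
  have hs' : g⁻¹ * s * g ∈ S := by
    have := (Subgroup.mem_normalizer_iff.mp ((Subgroup.normalizer (S : Set G)).inv_mem hg) s).mp hs
    simpa using this
  have hc := ht _ hs'
  calc s * (g * t * g⁻¹) = g * ((g⁻¹ * s * g) * t) * g⁻¹ := by group
    _ = g * (t * (g⁻¹ * s * g)) * g⁻¹ := by rw [hc]
    _ = (g * t * g⁻¹) * s := by group

private lemma conj_mem_S {F : Type*} [Field F]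
    (S : Subgroup (Matrix.SpecialLinearGroup (Fin 2) F))
    (hST : S ≤ diagonalTorusSL2 F)
    {g : Matrix.SpecialLinearGroup (Fin 2) F} (hg : g ∈ Subgroup.normalizer (diagonalTorusSL2 F : Set (Matrix.SpecialLinearGroup (Fin 2) F)))
    {s : Matrix.SpecialLinearGroup (Fin 2) F} (hs : s ∈ S) :
    g * s * g⁻¹ ∈ S := by
  have hsT : s ∈ diagonalTorusSL2 F := hST hs
  obtain ⟨h01, h10⟩ := hsT
  set c := g * s * g⁻¹ with hc
  have hcT : c ∈ diagonalTorusSL2 F := (Subgroup.mem_normalizer_iff.mp hg s).mp (hST hs)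
  obtain ⟨hc01, hc10⟩ := hcT
  -- trace invariance
  have htr : Matrix.trace (c : Matrix (Fin 2) (Fin 2) F)
      = Matrix.trace (s : Matrix (Fin 2) (Fin 2) F) := by
    have : (c : Matrix (Fin 2) (Fin 2) F) = (g : Matrix (Fin 2) (Fin 2) F) *
        ((s : Matrix (Fin 2) (Fin 2) F) * (g⁻¹ : Matrix.SpecialLinearGroup (Fin 2) F)) := by
      simp [hc, mul_assoc]
    rw [this, Matrix.trace_mul_comm]
    have h1 : ((s : Matrix (Fin 2) (Fin 2) F) * (g⁻¹ : Matrix.SpecialLinearGroup (Fin 2) F)) *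
        (g : Matrix (Fin 2) (Fin 2) F) = (s : Matrix (Fin 2) (Fin 2) F) := by
      rw [mul_assoc]
      have : ((g⁻¹ : Matrix.SpecialLinearGroup (Fin 2) F) : Matrix (Fin 2) (Fin 2) F) *
          (g : Matrix (Fin 2) (Fin 2) F) = 1 := by
        rw [← Matrix.SpecialLinearGroup.coe_mul, inv_mul_cancel,
          Matrix.SpecialLinearGroup.coe_one]
      rw [this, mul_one]
    rw [h1]
  have hdet_s : (s : Matrix (Fin 2) (Fin 2) F) 0 0 * (s : Matrix (Fin 2) (Fin 2) F) 1 1 = 1 := by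
    have := s.2
    rw [Matrix.det_fin_two] at this
    rw [h01, h10] at this; simpa using this
  have hdet_c : (c : Matrix (Fin 2) (Fin 2) F) 0 0 * (c : Matrix (Fin 2) (Fin 2) F) 1 1 = 1 := by
    have := c.2
    rw [Matrix.det_fin_two] at this
    rw [hc01, hc10] at this; simpa using this
  set a := (s : Matrix (Fin 2) (Fin 2) F) 0 0
  set d := (s : Matrix (Fin 2) (Fin 2) F) 1 1
  set b := (c : Matrix (Fin 2) (Fin 2) F) 0 0
  set e := (c : Matrix (Fin 2) (Fin 2) F) 1 1
  have htr' : b + e = a + d := by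
    simpa [Matrix.trace_fin_two] using htr
  have hfac : (b - a) * (b - d) = 0 := by linear_combination hdet_s - hdet_c + b * htr'
  rcases mul_eq_zero.mp hfac with h | h
  · -- b = a, hence e = d, c = s
    have hba : b = a := sub_eq_zero.mp h
    have hed : e = d := by linear_combination htr' - hba
    have hcs : c = s := by
      ext i j
      fin_cases i <;> fin_cases j
      · exact hba
      · simp [hc01, h01]
      · simp [hc10, h10]
      · exact hed
    rw [hcs]
    exact hs
  · -- b = d, hence e = a, c = s⁻¹
    have hbd : b = d := sub_eq_zero.mp h
    have hea : e = a := by linear_combination htr' - hbd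
    have hsinv : ((s⁻¹ : Matrix.SpecialLinearGroup (Fin 2) F) : Matrix (Fin 2) (Fin 2) F)
        = Matrix.adjugate (s : Matrix (Fin 2) (Fin 2) F) :=
      Matrix.SpecialLinearGroup.coe_inv s
    have hcs : c = s⁻¹ := by
      ext i j
      fin_cases i <;> fin_cases j
      · rw [hsinv, Matrix.adjugate_fin_two]; exact hbd
      · simp [hc01, hsinv, Matrix.adjugate_fin_two, h01]
      · simp [hc10, hsinv, Matrix.adjugate_fin_two, h10]
      · rw [hsinv, Matrix.adjugate_fin_two]; exact hea
    rw [hcs]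
    exact S.inv_mem hs

/-- If `S ≤ T` is a subgroup of the diagonal torus `T` of `SL(2, F)` whose centralizer
in `SL(2, F)` equals `T`, then the normalizer of `S` equals the normalizer of `T`. -/
theorem SL2_normalizer_eq_normalizer_torus {F : Type*} [Field F] [Fintype F]
    (S : Subgroup (Matrix.SpecialLinearGroup (Fin 2) F))
    (hST : S ≤ diagonalTorusSL2 F)
    (hcent : Subgroup.centralizer (S : Set (Matrix.SpecialLinearGroup (Fin 2) F)) =
      diagonalTorusSL2 F) :
    Subgroup.normalizer (S : Set (Matrix.SpecialLinearGroup (Fin 2) F)) =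
      Subgroup.normalizer (diagonalTorusSL2 F : Set (Matrix.SpecialLinearGroup (Fin 2) F)) := by
  apply le_antisymm
  · intro g hg
    rw [← hcent]
    rw [Subgroup.mem_normalizer_iff]
    intro t
    constructor
    · intro ht
      exact conj_mem_centralizer hg ht
    · intro ht
      have := conj_mem_centralizer ((Subgroup.normalizer (S : Set (Matrix.SpecialLinearGroup (Fin 2) F))).inv_mem hg) ht
      simpa [mul_assoc] using this
  · intro g hg
    rw [Subgroup.mem_normalizer_iff]
    intro s
    constructor
    · intro hs
      exact conj_mem_S S hST hg hs
    · intro hs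
      have := conj_mem_S S hST ((Subgroup.normalizer (diagonalTorusSL2 F : Set (Matrix.SpecialLinearGroup (Fin 2) F))).inv_mem hg) hs
      simpa [mul_assoc] using this
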